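/- The generating function G(x) = Σ_{k≥1} g_{k−1}x^k ∈ ℚ⟦x⟧ of the lush-tree sequence satisfies the quadratic identity 2G(x)² − (2x+1)G(x) + x + x² = 0; equivalently, (2x + 1 − 4G(x))² = 1 − 4x − 4x² in ℚ⟦x⟧. -/

import Mathlib

set_option maxHeartbeats 1000000

open PowerSeries

noncomputable def genFun (g : ℕ → ℕ) : PowerSeries ℚ :=
  PowerSeries.mk fun m => if m = 0 then 0 else (g (m - 1) : ℚ)

namespace LushAux

variable (g : ℕ → ℕ)

/-- Sum over "tail-valid" compositions: a block `1` may occur only as the last block. -/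
def Tf (N : ℕ) : ℕ :=
  ∑ c : Composition N,
    if (∀ i : Fin c.blocks.length, c.blocks.get i = 1 → (i : ℕ) = c.blocks.length - 1)
    then (c.blocks.map (fun j => g (j - 1))).prod else 0

/-- Sum over "valid" compositions: length `> 1` and a block `1` only first or last. -/
def Ff (N : ℕ) : ℕ :=
  ∑ c : Composition N,
    if 1 < c.blocks.length ∧
        (∀ i : Fin c.blocks.length,
          c.blocks.get i = 1 → (i : ℕ) = 0 ∨ (i : ℕ) = c.blocks.length - 1)
    then (c.blocks.map (fun j => g (j - 1))).prod else 0

lemma blocks_ne_nil {N : ℕ} (hN : 1 ≤ N) (c : Composition N) : c.blocks ≠ [] := by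
  intro h
  have := c.blocks_sum
  rw [h] at this
  simp at this
  omega

/-- Splitting off the first block of compositions with at least two blocks. -/
lemma comp_split (N : ℕ) (f : List ℕ → ℕ) :
    (∑ c : Composition N, if 1 < c.blocks.length then f c.blocks else 0)
    = ∑ k ∈ Finset.Icc 1 (N - 1), ∑ c : Composition (N - k), f (k :: c.blocks) := by
  rw [← Finset.sum_filter, Finset.sum_sigma']
  refine Finset.sum_bij'
    (fun (c : Composition N) (hc : c ∈ Finset.univ.filter fun c => 1 < c.blocks.length) =>
      (⟨c.blocks.head!,
        ⟨c.blocks.tail, fun hi => c.blocks_pos (List.mem_of_mem_tail hi), by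
          have hne : c.blocks ≠ [] := by
            have := (Finset.mem_filter.mp hc).2
            intro h; rw [h] at this; simp at this
          have hs := c.blocks_sum
          rw [← List.cons_head!_tail hne, List.sum_cons] at hs
          omega⟩⟩ : (k : ℕ) × Composition (N - k)))
    (fun p hp =>
      ⟨p.1 :: p.2.blocks, by
          intro i hi
          rcases List.mem_cons.mp hi with h | h
          · have := (Finset.mem_Icc.mp (Finset.mem_sigma.mp hp).1).1
            omega
          · exact p.2.blocks_pos h, by
          have h1 := (Finset.mem_Icc.mp (Finset.mem_sigma.mp hp).1).1
          have h2 := (Finset.mem_Icc.mp (Finset.mem_sigma.mp hp).1).2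
          have := p.2.blocks_sum
          simp [List.sum_cons, this]
          omega⟩)
    ?_ ?_ ?_ ?_ ?_
  · -- maps into sigma finset
    intro c hc
    have hlen := (Finset.mem_filter.mp hc).2
    have hne : c.blocks ≠ [] := by intro h; rw [h] at hlen; simp at hlen
    have hs := c.blocks_sum
    rw [← List.cons_head!_tail hne, List.sum_cons] at hs
    have hpos : 0 < c.blocks.head! :=
      c.blocks_pos (List.head!_mem_self hne)
    have htne : c.blocks.tail ≠ [] := by
      have hl := List.length_tail (l := c.blocks)
      intro h; rw [h] at hl; simp at hl; omega
    have htpos : 0 < c.blocks.tail.sum := by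
      rcases List.exists_cons_of_ne_nil htne with ⟨x, rest, hx⟩
      have hxpos : 0 < x := by
        apply c.blocks_pos
        apply List.mem_of_mem_tail
        rw [hx]; exact List.mem_cons_self
      rw [hx, List.sum_cons]; omega
    exact Finset.mem_sigma.mpr
      ⟨Finset.mem_Icc.mpr ⟨hpos, show c.blocks.head! ≤ N - 1 by omega⟩, Finset.mem_univ _⟩
  · -- inverse maps into filter
    intro p hp
    refine Finset.mem_filter.mpr ⟨Finset.mem_univ _, ?_⟩
    have h1 := (Finset.mem_Icc.mp (Finset.mem_sigma.mp hp).1).1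
    have h2 := (Finset.mem_Icc.mp (Finset.mem_sigma.mp hp).1).2
    have hne : p.2.blocks ≠ [] := blocks_ne_nil (by omega) _
    show 1 < (p.1 :: p.2.blocks).length
    simp only [List.length_cons]
    have := List.length_pos_iff.mpr hne
    omega
  · -- left inverse
    intro c hc
    apply Composition.ext
    show c.blocks.head! :: c.blocks.tail = c.blocks
    apply List.cons_head!_tail
    have hlen := (Finset.mem_filter.mp hc).2
    intro h; rw [h] at hlen; simp at hlen
  · -- right inverse
    intro p hp
    rfl
  · -- values agree
    intro c hc
    have hlen := (Finset.mem_filter.mp hc).2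
    have hne : c.blocks ≠ [] := by intro h; rw [h] at hlen; simp at hlen
    exact (congrArg f (List.cons_head!_tail hne)).symm

lemma cons_cond_valid (k : ℕ) (l : List ℕ) (hl : l ≠ []) :
    (∀ i : Fin (k :: l).length,
        (k :: l).get i = 1 → (i : ℕ) = 0 ∨ (i : ℕ) = (k :: l).length - 1)
    ↔ (∀ i : Fin l.length, l.get i = 1 → (i : ℕ) = l.length - 1) := by
  have hlpos : 0 < l.length := List.length_pos_iff.mpr hl
  constructor
  · intro H i hi
    have hlt : (i : ℕ) + 1 < (k :: l).length := by
      simp only [List.length_cons]; omega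
    have := H ⟨(i : ℕ) + 1, hlt⟩ (by
      simpa only [List.get_eq_getElem, List.getElem_cons_succ] using hi)
    simp only [List.length_cons] at this
    have hi2 := i.isLt
    omega
  · intro H i hi
    rcases i with ⟨iv, hiv⟩
    cases iv with
    | zero => left; rfl
    | succ j =>
      right
      simp only [List.length_cons] at hiv ⊢
      have hj : j < l.length := by omega
      have := H ⟨j, hj⟩ (by
        simpa only [List.get_eq_getElem, List.getElem_cons_succ] using hi)
      simp only at this
      omega

lemma cons_cond_tval (k : ℕ) (l : List ℕ) (hl : l ≠ []) :
    (∀ i : Fin (k :: l).length, (k :: l).get i = 1 → (i : ℕ) = (k :: l).length - 1)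
    ↔ (k ≠ 1 ∧ ∀ i : Fin l.length, l.get i = 1 → (i : ℕ) = l.length - 1) := by
  have hlpos : 0 < l.length := List.length_pos_iff.mpr hl
  constructor
  · intro H
    constructor
    · intro hk
      have := H ⟨0, by simp⟩ (by simpa using hk)
      simp only [List.length_cons] at this
      omega
    · intro i hi
      have hlt : (i : ℕ) + 1 < (k :: l).length := by
        simp only [List.length_cons]; omega
      have := H ⟨(i : ℕ) + 1, hlt⟩ (by
        simpa only [List.get_eq_getElem, List.getElem_cons_succ] using hi)
      simp only [List.length_cons] at this
      have hi2 := i.isLt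
      omega
  · rintro ⟨hk, H⟩ i hi
    rcases i with ⟨iv, hiv⟩
    cases iv with
    | zero =>
      exfalso
      apply hk
      simpa using hi
    | succ j =>
      simp only [List.length_cons] at hiv ⊢
      have hj : j < l.length := by omega
      have := H ⟨j, hj⟩ (by
        simpa only [List.get_eq_getElem, List.getElem_cons_succ] using hi)
      simp only at this
      omega

lemma Ff_eq (N : ℕ) :
    Ff g N = ∑ k ∈ Finset.Icc 1 (N - 1), g (k - 1) * Tf g (N - k) := by
  have h1 : Ff g N = ∑ c : Composition N,
      (if 1 < c.blocks.length then
        (if (∀ i : Fin c.blocks.length,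
              c.blocks.get i = 1 → (i : ℕ) = 0 ∨ (i : ℕ) = c.blocks.length - 1)
         then (c.blocks.map (fun j => g (j - 1))).prod else 0) else 0) := by
    unfold Ff
    apply Finset.sum_congr rfl
    intro c _
    split_ifs <;> tauto
  refine h1.trans ((comp_split N (fun l =>
      if (∀ i : Fin l.length, l.get i = 1 → (i : ℕ) = 0 ∨ (i : ℕ) = l.length - 1)
      then (l.map (fun j => g (j - 1))).prod else 0)).trans ?_)
  apply Finset.sum_congr rfl
  intro k hk
  rw [Finset.mem_Icc] at hk
  rw [Tf, Finset.mul_sum]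
  apply Finset.sum_congr rfl
  intro c _
  have hne : c.blocks ≠ [] := blocks_ne_nil (by omega) c
  show (if (∀ i : Fin (k :: c.blocks).length,
        (k :: c.blocks).get i = 1 → (i : ℕ) = 0 ∨ (i : ℕ) = (k :: c.blocks).length - 1)
      then ((k :: c.blocks).map (fun j => g (j - 1))).prod else 0)
    = g (k - 1) * (if (∀ i : Fin c.blocks.length,
        c.blocks.get i = 1 → (i : ℕ) = c.blocks.length - 1)
      then (c.blocks.map (fun j => g (j - 1))).prod else 0)
  by_cases h : (∀ i : Fin c.blocks.length, c.blocks.get i = 1 → (i : ℕ) = c.blocks.length - 1)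
  · rw [if_pos ((cons_cond_valid k c.blocks hne).mpr h), if_pos h,
      List.map_cons, List.prod_cons]
  · rw [if_neg (fun hc => h ((cons_cond_valid k c.blocks hne).mp hc)), if_neg h,
      Nat.mul_zero]

lemma Tf_zero : Tf g 0 = 1 := by
  have h0 : ∀ c : Composition 0, c.blocks = [] := by
    intro c
    rcases c with ⟨bl, hpos, hsum⟩
    cases bl with
    | nil => rfl
    | cons a rest =>
      exfalso
      have ha : 0 < a := hpos List.mem_cons_self
      rw [List.sum_cons] at hsum
      omega
  have hval : ∀ c : Composition 0,
      (if (∀ i : Fin c.blocks.length, c.blocks.get i = 1 → (i : ℕ) = c.blocks.length - 1)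
       then (c.blocks.map (fun j => g (j - 1))).prod else 0) = 1 := by
    intro c
    have hlen : c.blocks.length = 0 := by rw [h0 c]; rfl
    rw [if_pos]
    · rw [h0 c]; rfl
    · intro i _
      exfalso
      have := i.isLt
      omega
  haveI : Unique (Composition 0) :=
    ⟨⟨⟨[], by intro i h; simp at h, rfl⟩⟩, fun c => Composition.ext (h0 c)⟩
  rw [Tf, Finset.sum_congr rfl (fun c _ => hval c)]
  simp

lemma Tf_eq (N : ℕ) (hN : 1 ≤ N) :
    Tf g N = g (N - 1) + ∑ k ∈ Finset.Icc 2 (N - 1), g (k - 1) * Tf g (N - k) := by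
  have hsplit : Tf g N =
      (∑ c : Composition N, if c.blocks.length = 1 then
        (if (∀ i : Fin c.blocks.length, c.blocks.get i = 1 → (i : ℕ) = c.blocks.length - 1)
         then (c.blocks.map (fun j => g (j - 1))).prod else 0) else 0)
      + (∑ c : Composition N, if 1 < c.blocks.length then
        (if (∀ i : Fin c.blocks.length, c.blocks.get i = 1 → (i : ℕ) = c.blocks.length - 1)
         then (c.blocks.map (fun j => g (j - 1))).prod else 0) else 0) := by
    rw [Tf, ← Finset.sum_add_distrib]
    apply Finset.sum_congr rfl
    intro c _
    have hl : 0 < c.blocks.length := List.length_pos_iff.mpr (blocks_ne_nil hN c)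
    split_ifs <;> omega
  have hsingle : (∑ c : Composition N, if c.blocks.length = 1 then
        (if (∀ i : Fin c.blocks.length, c.blocks.get i = 1 → (i : ℕ) = c.blocks.length - 1)
         then (c.blocks.map (fun j => g (j - 1))).prod else 0) else 0) = g (N - 1) := by
    have hb : (Composition.single N hN).blocks = [N] := Composition.single_blocks hN
    have hlen1 : (Composition.single N hN).blocks.length = 1 := by rw [hb]; rfl
    rw [Finset.sum_eq_single_of_mem (Composition.single N hN) (Finset.mem_univ _)]
    · rw [if_pos hlen1, if_pos]
      · rw [hb]; simp
      · intro i _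
        have := i.isLt
        omega
    · intro b _ hbne
      rw [if_neg]
      intro hlen
      exact hbne ((Composition.eq_single_iff_length hN).mpr hlen)
  rw [hsplit, hsingle]
  congr 1
  refine ((comp_split N (fun l =>
      if (∀ i : Fin l.length, l.get i = 1 → (i : ℕ) = l.length - 1)
      then (l.map (fun j => g (j - 1))).prod else 0)).trans ?_)
  refine ((Finset.sum_subset (Finset.Icc_subset_Icc_left one_le_two) ?_).symm).trans
    (Finset.sum_congr rfl ?_)
  · intro k hk hk2
    rw [Finset.mem_Icc] at hk
    rw [Finset.mem_Icc] at hk2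
    have hk1 : k = 1 := by omega
    subst hk1
    apply Finset.sum_eq_zero
    intro c _
    have hne : c.blocks ≠ [] := blocks_ne_nil (by omega) c
    show (if (∀ i : Fin (1 :: c.blocks).length,
        (1 :: c.blocks).get i = 1 → (i : ℕ) = (1 :: c.blocks).length - 1)
      then ((1 :: c.blocks).map (fun j => g (j - 1))).prod else 0) = 0
    rw [if_neg]
    intro hc
    exact ((cons_cond_tval 1 c.blocks hne).mp hc).1 rfl
  · intro k hk
    rw [Finset.mem_Icc] at hk
    rw [Tf, Finset.mul_sum]
    apply Finset.sum_congr rfl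
    intro c _
    have hne : c.blocks ≠ [] := blocks_ne_nil (by omega) c
    show (if (∀ i : Fin (k :: c.blocks).length,
        (k :: c.blocks).get i = 1 → (i : ℕ) = (k :: c.blocks).length - 1)
      then ((k :: c.blocks).map (fun j => g (j - 1))).prod else 0)
      = g (k - 1) * (if (∀ i : Fin c.blocks.length,
        c.blocks.get i = 1 → (i : ℕ) = c.blocks.length - 1)
      then (c.blocks.map (fun j => g (j - 1))).prod else 0)
    by_cases h : (∀ i : Fin c.blocks.length, c.blocks.get i = 1 → (i : ℕ) = c.blocks.length - 1)
    · rw [if_pos ((cons_cond_tval k c.blocks hne).mpr ⟨by omega, h⟩), if_pos h,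
        List.map_cons, List.prod_cons]
    · rw [if_neg (fun hc => h ((cons_cond_tval k c.blocks hne).mp hc).2), if_neg h,
        Nat.mul_zero]

lemma Tf_one : Tf g 1 = g 0 := by
  have := Tf_eq g 1 le_rfl
  simpa using this

end LushAux

theorem lush_generating_function_quadratic
    (g : ℕ → ℕ) (hg0 : g 0 = 1) (hg1 : g 1 = 1)
    (hgrec : ∀ n : ℕ, 2 ≤ n →
      g n = ∑ c : Composition (n + 1),
        if 1 < c.blocks.length ∧
            (∀ i : Fin c.blocks.length,
              c.blocks.get i = 1 → (i : ℕ) = 0 ∨ (i : ℕ) = c.blocks.length - 1)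
        then (c.blocks.map (fun j => g (j - 1))).prod else 0) :
    2 * genFun g ^ 2 - (2 * PowerSeries.X + 1) * genFun g
        + PowerSeries.X + PowerSeries.X ^ 2 = 0 ∧
    (2 * PowerSeries.X + 1 - 4 * genFun g) ^ 2
        = 1 - 4 * PowerSeries.X - 4 * PowerSeries.X ^ 2 := by
  classical
  have hFg : ∀ m : ℕ, 2 ≤ m → LushAux.Ff g m = g (m - 1) := by
    intro m hm
    rcases Nat.lt_or_ge m 3 with hm3 | hm3
    · have hm2 : m = 2 := by omega
      subst hm2
      rw [LushAux.Ff_eq]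
      simp [LushAux.Tf_one, hg0, hg1]
    · obtain ⟨n, rfl⟩ : ∃ n, m = n + 1 := ⟨m - 1, by omega⟩
      have hn : 2 ≤ n := by omega
      simpa [LushAux.Ff] using (hgrec n hn).symm
  have hstep : ∀ m : ℕ, 1 ≤ m → LushAux.Tf g m + LushAux.Tf g (m - 1) = 2 * g (m - 1) := by
    intro m hm
    rcases Nat.lt_or_ge m 2 with hm2 | hm2
    · have hm1 : m = 1 := by omega
      subst hm1
      simp [LushAux.Tf_one, LushAux.Tf_zero, hg0]
    · have hI : Finset.Icc 1 (m - 1) = insert 1 (Finset.Icc 2 (m - 1)) := by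
        ext x
        simp only [Finset.mem_Icc, Finset.mem_insert]
        omega
      have h1 := LushAux.Ff_eq g m
      rw [hI, Finset.sum_insert (by simp)] at h1
      have h2 := LushAux.Tf_eq g m (by omega)
      have h3 := hFg m hm2
      simp only [Nat.sub_self] at h1
      rw [hg0] at h1
      omega
  have hkey : ∀ M : ℕ,
      2 * (∑ k ∈ Finset.Icc 1 (M + 2), g (k - 1) * g (M + 3 - k - 1))
        = g (M + 2) + 2 * g (M + 1) := by
    intro M
    have e1 : ∑ k ∈ Finset.Icc 1 (M + 2), 2 * (g (k - 1) * g (M + 3 - k - 1))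
        = (∑ k ∈ Finset.Icc 1 (M + 2), g (k - 1) * LushAux.Tf g (M + 3 - k))
          + ∑ k ∈ Finset.Icc 1 (M + 2), g (k - 1) * LushAux.Tf g (M + 3 - k - 1) := by
      rw [← Finset.sum_add_distrib]
      apply Finset.sum_congr rfl
      intro k hk
      rw [Finset.mem_Icc] at hk
      have hs := hstep (M + 3 - k) (by omega)
      calc 2 * (g (k - 1) * g (M + 3 - k - 1))
          = g (k - 1) * (2 * g (M + 3 - k - 1)) := by ring
        _ = g (k - 1) * (LushAux.Tf g (M + 3 - k) + LushAux.Tf g (M + 3 - k - 1)) := by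
            rw [hs]
        _ = _ := by ring
    have e2 : ∑ k ∈ Finset.Icc 1 (M + 2), g (k - 1) * LushAux.Tf g (M + 3 - k - 1)
        = LushAux.Ff g (M + 2) + g (M + 1) := by
      rw [show (M + 2) = (M + 1) + 1 from rfl, Finset.sum_Icc_succ_top (by omega)]
      rw [show M + 3 - (M + 1 + 1) - 1 = 0 from by omega, LushAux.Tf_zero, Nat.mul_one]
      congr 1
      rw [LushAux.Ff_eq]
      apply Finset.sum_congr
      · congr 1
      · intro k hk
        rw [Finset.mem_Icc] at hk
        rw [show M + 2 - k = M + 3 - k - 1 from by omega]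
    have e3 : LushAux.Ff g (M + 3)
        = ∑ k ∈ Finset.Icc 1 (M + 2), g (k - 1) * LushAux.Tf g (M + 3 - k) := by
      have h5 := LushAux.Ff_eq g (M + 3)
      rw [show M + 3 - 1 = M + 2 from by omega] at h5
      exact h5
    have h6 := hFg (M + 3) (by omega)
    have h7 := hFg (M + 2) (by omega)
    rw [show M + 3 - 1 = M + 2 from by omega] at h6
    rw [show M + 2 - 1 = M + 1 from by omega] at h7
    rw [Finset.mul_sum, e1, ← e3, e2, h6, h7]
    omega
  have hcoeff : ∀ m : ℕ, (PowerSeries.coeff m) (genFun g)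
      = if m = 0 then 0 else (g (m - 1) : ℚ) := fun m => PowerSeries.coeff_mk _ _
  have ha : ∀ n : ℕ, (PowerSeries.coeff n) (genFun g * genFun g)
      = ∑ k ∈ Finset.range (n + 1),
          (if k = 0 then 0 else (g (k - 1) : ℚ))
          * (if n - k = 0 then 0 else (g (n - k - 1) : ℚ)) := by
    intro n
    rw [PowerSeries.coeff_mul, Finset.Nat.sum_antidiagonal_eq_sum_range_succ_mk]
    simp only [hcoeff]
  have hb : ∀ m : ℕ, (PowerSeries.coeff (m + 3)) (genFun g * genFun g)
      = ((∑ k ∈ Finset.Icc 1 (m + 2), g (k - 1) * g (m + 3 - k - 1) : ℕ) : ℚ) := by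
    intro m
    rw [ha (m + 3)]
    rw [← Finset.sum_subset (show Finset.Icc 1 (m + 2) ⊆ Finset.range (m + 3 + 1) by
      intro k hk; rw [Finset.mem_Icc] at hk; rw [Finset.mem_range]; omega)]
    · push_cast
      apply Finset.sum_congr rfl
      intro k hk
      rw [Finset.mem_Icc] at hk
      rw [if_neg (by omega), if_neg (by omega)]
    · intro k hk hk2
      rw [Finset.mem_range] at hk
      rw [Finset.mem_Icc] at hk2
      rcases Nat.eq_zero_or_pos k with h0 | h0
      · rw [if_pos h0, zero_mul]
      · have hnk : m + 3 - k = 0 := by omega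
        rw [hnk, if_pos rfl, mul_zero]
  have hMain : 2 * genFun g ^ 2 + PowerSeries.X + PowerSeries.X ^ 2
      = (2 * PowerSeries.X + 1) * genFun g := by
    have hexp : (2 * PowerSeries.X + 1) * genFun g
        = 2 * (PowerSeries.X * genFun g) + genFun g := by ring
    have hsq : genFun g ^ 2 = genFun g * genFun g := sq (genFun g)
    ext n
    rw [hexp, hsq, map_add, map_add, map_add]
    have hC2 : (2 : PowerSeries ℚ) = (PowerSeries.C (R := ℚ)) 2 := by
      rw [map_ofNat]
    rw [show ((2 : PowerSeries ℚ) * (genFun g * genFun g))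
        = ((PowerSeries.C (R := ℚ)) 2) * (genFun g * genFun g) by rw [← hC2],
      PowerSeries.coeff_C_mul]
    rw [show ((2 : PowerSeries ℚ) * (PowerSeries.X * genFun g))
        = ((PowerSeries.C (R := ℚ)) 2) * (PowerSeries.X * genFun g) by rw [← hC2],
      PowerSeries.coeff_C_mul]
    match n with
    | 0 =>
      simp [ha, hcoeff, PowerSeries.coeff_mul]
    | 1 =>
      rw [ha 1, PowerSeries.coeff_succ_X_mul]
      simp [hcoeff, Finset.sum_range_succ, PowerSeries.coeff_one, PowerSeries.coeff_X,
        PowerSeries.coeff_X_pow, hg0]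
    | 2 =>
      rw [ha 2, PowerSeries.coeff_succ_X_mul]
      simp [hcoeff, Finset.sum_range_succ, PowerSeries.coeff_one, PowerSeries.coeff_X,
        PowerSeries.coeff_X_pow, hg0, hg1]
    | (m + 3) =>
      rw [hb m, PowerSeries.coeff_succ_X_mul]
      have hk := hkey m
      simp only [hcoeff, PowerSeries.coeff_X, PowerSeries.coeff_X_pow,
        if_neg (by omega : ¬ (m + 3 = 1)), if_neg (by omega : ¬ (m + 3 = 2)),
        if_neg (by omega : ¬ (m + 3 = 0)), if_neg (by omega : ¬ (m + 2 = 0))]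
      rw [show m + 3 - 1 = m + 2 from rfl, show m + 2 - 1 = m + 1 from rfl]
      have hk2 : 2 * ∑ k ∈ Finset.Icc 1 (m + 2), g (k - 1) * g (m + 3 - k - 1)
          = 2 * g (m + 1) + g (m + 2) := by omega
      exact_mod_cast hk2
  refine ⟨by linear_combination hMain, by linear_combination (8 : PowerSeries ℚ) * hMain⟩
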